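/- For every natural number s and every real x, the expectation of Φ_t(x) when t is a sum of s independent uniform ±1 random variables equals x^s; equivalently, 2^{−s} · ∑_{j=0}^{s} binom(s,j) · Φ_{|2j−s|}(x) = x^s. -/
import Mathlib


/-- Φ_t, the Chebyshev polynomial of the first kind over ℝ (indexed by ℤ,
with Φ_{-t} = Φ_t): Φ_0(x)=1, Φ_1(x)=x, Φ_{t+1}(x)=2x·Φ_t(x)−Φ_{t−1}(x). -/
noncomputable def Phi (t : ℤ) : Polynomial ℝ := Polynomial.Chebyshev.T ℝ t

lemma Phi_abs (t : ℤ) : Phi |t| = Phi t := by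
  rcases abs_choice t with h | h
  · rw [h]
  · rw [h, Phi, Polynomial.Chebyshev.T_neg]; rfl

lemma Phi_rec (t : ℤ) (x : ℝ) :
    (Phi (t + 1)).eval x + (Phi (t - 1)).eval x = 2 * x * (Phi t).eval x := by
  have h := Polynomial.Chebyshev.T_add_two ℝ (t - 1)
  have h1 : t - 1 + 2 = t + 1 := by ring
  have h2 : t - 1 + 1 = t := by ring
  rw [h1, h2] at h
  simp only [Phi, h]
  simp [mul_comm]

lemma key (s : ℕ) (x : ℝ) :
    ∑ j ∈ Finset.range (s + 1),
      (s.choose j : ℝ) * (Phi (2 * (j : ℤ) - s)).eval x = (2 * x) ^ s := by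
  induction s with
  | zero => simp [Phi, Polynomial.Chebyshev.T_zero]
  | succ s ih =>
    have hsplit : ∀ j ∈ Finset.range (s + 2),
        ((s + 1).choose j : ℝ) * (Phi (2 * (j : ℤ) - (s + 1 : ℕ))).eval x =
        (s.choose j : ℝ) * (Phi (2 * (j : ℤ) - (s : ℕ) - 1)).eval x +
        (s.choose (j - 1) : ℝ) * (if j = 0 then 0 else (Phi (2 * ((j : ℤ) - 1) - (s : ℕ) + 1)).eval x) := by
      intro j _
      rcases Nat.eq_zero_or_pos j with rfl | hj
      · simp
        congr 1
        ring
      · obtain ⟨k, rfl⟩ := Nat.exists_eq_succ_of_ne_zero hj.ne'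
        rw [Nat.succ_sub_one, if_neg (Nat.succ_ne_zero k), Nat.choose_succ_succ,
          show 2 * ((k + 1 : ℕ) : ℤ) - ((s + 1 : ℕ) : ℤ) = 2 * (k : ℤ) - s + 1 by push_cast; ring,
          show 2 * ((k + 1 : ℕ) : ℤ) - ((s : ℕ) : ℤ) - 1 = 2 * (k : ℤ) - s + 1 by push_cast; ring,
          show 2 * (((k + 1 : ℕ) : ℤ) - 1) - ((s : ℕ) : ℤ) + 1 = 2 * (k : ℤ) - s + 1 by push_cast; ring]
        push_cast [Nat.choose_succ_succ]
        ring
    rw [Finset.sum_congr rfl hsplit, Finset.sum_add_distrib]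
    -- first sum: last term vanishes since choose s (s+1) = 0
    have hA : ∑ j ∈ Finset.range (s + 2),
        (s.choose j : ℝ) * (Phi (2 * (j : ℤ) - (s : ℕ) - 1)).eval x =
        ∑ j ∈ Finset.range (s + 1),
        (s.choose j : ℝ) * (Phi (2 * (j : ℤ) - (s : ℕ) - 1)).eval x := by
      rw [Finset.sum_range_succ, Nat.choose_succ_self]
      simp
    have hB : ∑ j ∈ Finset.range (s + 2),
        (s.choose (j - 1) : ℝ) * (if j = 0 then 0 else (Phi (2 * ((j : ℤ) - 1) - (s : ℕ) + 1)).eval x) =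
        ∑ j ∈ Finset.range (s + 1),
        (s.choose j : ℝ) * (Phi (2 * (j : ℤ) - (s : ℕ) + 1)).eval x := by
      rw [Finset.sum_range_succ']
      simp
    rw [hA, hB, ← Finset.sum_add_distrib]
    have : ∀ j ∈ Finset.range (s + 1),
        (s.choose j : ℝ) * (Phi (2 * (j : ℤ) - (s : ℕ) - 1)).eval x +
        (s.choose j : ℝ) * (Phi (2 * (j : ℤ) - (s : ℕ) + 1)).eval x =
        2 * x * ((s.choose j : ℝ) * (Phi (2 * (j : ℤ) - (s : ℕ))).eval x) := by
      intro j _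
      have h := Phi_rec (2 * (j : ℤ) - s) x
      linear_combination (s.choose j : ℝ) * h
    rw [Finset.sum_congr rfl this, ← Finset.mul_sum, ih]
    ring

/-- The expectation of Φ_t(x), where t is a sum of s i.i.d. uniform ±1 random
variables, equals x^s:  2^{−s} · ∑_{j=0}^{s} binom(s,j) · Φ_{|2j−s|}(x) = x^s. -/
theorem chebyshev_binomial_expectation (s : ℕ) (x : ℝ) :
    ((2 : ℝ) ^ s)⁻¹ *
      ∑ j ∈ Finset.range (s + 1),
        (s.choose j : ℝ) * (Phi |2 * (j : ℤ) - s|).eval x = x ^ s := by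
  simp only [Phi_abs]
  rw [key, mul_pow]
  rw [← mul_assoc, inv_mul_cancel₀ (by positivity)]
  ring
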